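/- If D = λ·Id with λ > 0, the uniform probability distribution on the unit sphere S^{n-1} is the unique minimizer of the energy E(μ) = ∬ exp(λ⟪x, y⟫) dμ(x) dμ(y) over Borel probability measures on the sphere. -/

import Mathlib

open MeasureTheory RealInnerProductSpace ENNReal

/-- The uniform (normalized surface) probability measure on the unit sphere of `ℝ^n`,
viewed as a measure on the ambient space. -/
noncomputable def uniformSphere (n : ℕ) : Measure (EuclideanSpace ℝ (Fin n)) :=
  (((volume : Measure (EuclideanSpace ℝ (Fin n))).toSphere) Set.univ)⁻¹ •
    Measure.map Subtype.val ((volume : Measure (EuclideanSpace ℝ (Fin n))).toSphere)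

/-- The interaction energy for `D = λ·Id`. -/
noncomputable def energyId {n : ℕ} (lam : ℝ)
    (μ : Measure (EuclideanSpace ℝ (Fin n))) : ℝ :=
  ∫ x, ∫ y, Real.exp (lam * ⟪x, y⟫) ∂μ ∂μ

namespace Stmt11Aux

open Metric Set Filter Topology

variable {n : ℕ}

local notation "E" => EuclideanSpace ℝ (Fin n)

lemma nontrivialE (hn : 1 ≤ n) : Nontrivial (EuclideanSpace ℝ (Fin n)) := by
  have : Nonempty (Fin n) := ⟨⟨0, hn⟩⟩
  refine ⟨EuclideanSpace.single (Classical.arbitrary (Fin n)) (1:ℝ), 0, ?_⟩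
  intro h
  have := congrArg (fun z => ‖z‖) h
  simp [EuclideanSpace.norm_single] at this

lemma toSphere_univ_ne_zero (hn : 1 ≤ n) :
    ((volume : Measure E).toSphere) Set.univ ≠ 0 := by
  haveI := nontrivialE hn
  rw [Measure.toSphere_apply_univ]
  refine mul_ne_zero ?_ ?_
  · simp [finrank_euclideanSpace_fin]; omega
  · exact (measure_ball_pos _ _ one_pos).ne'

lemma toSphere_univ_ne_top :
    ((volume : Measure E).toSphere) Set.univ ≠ ⊤ :=
  (measure_lt_top _ _).ne

lemma uniformSphere_apply (s : Set E) (hs : MeasurableSet s) :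
    uniformSphere n s = (((volume : Measure E).toSphere) Set.univ)⁻¹ *
      ((volume : Measure E).toSphere) (Subtype.val ⁻¹' s) := by
  rw [uniformSphere, Measure.smul_apply, Measure.map_apply measurable_subtype_coe hs,
    smul_eq_mul]

lemma uniformSphere_sphere (hn : 1 ≤ n) :
    uniformSphere n (Metric.sphere (0 : E) 1) = 1 := by
  rw [uniformSphere_apply _ Metric.isClosed_sphere.measurableSet]
  have : (Subtype.val ⁻¹' (Metric.sphere (0 : E) 1) : Set (Metric.sphere (0:E) 1)) = Set.univ := by
    ext x; simp [x.2]
  rw [this, ENNReal.inv_mul_cancel (toSphere_univ_ne_zero hn) toSphere_univ_ne_top]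

lemma uniformSphere_isProb (hn : 1 ≤ n) : IsProbabilityMeasure (uniformSphere n) := by
  constructor
  rw [uniformSphere_apply _ MeasurableSet.univ, Set.preimage_univ,
    ENNReal.inv_mul_cancel (toSphere_univ_ne_zero hn) toSphere_univ_ne_top]

end Stmt11Aux

namespace Stmt11Aux
open Metric Set Pointwise

variable {n : ℕ}
local notation "E" => EuclideanSpace ℝ (Fin n)

lemma smul_preimage_isometry (R : EuclideanSpace ℝ (Fin n) ≃ₗᵢ[ℝ] EuclideanSpace ℝ (Fin n))
    (s : Set E) :
    Ioo (0:ℝ) 1 • ((R ⁻¹' s) ∩ sphere (0:E) 1) = R ⁻¹' (Ioo (0:ℝ) 1 • (s ∩ sphere (0:E) 1)) := by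
  ext x
  constructor
  · rintro ⟨r, hr, b, ⟨hbs, hb1⟩, rfl⟩
    refine ⟨r, hr, R b, ⟨hbs, ?_⟩, ?_⟩
    · simpa using hb1
    · simp [Set.mem_preimage]
  · rintro ⟨r, hr, b, ⟨hbs, hb1⟩, hx⟩
    refine ⟨r, hr, R.symm b, ⟨by simp [Set.mem_preimage, hbs], ?_⟩, ?_⟩
    · simpa using hb1
    · apply R.injective
      simpa using hx

lemma volume_preimage_isometry (R : EuclideanSpace ℝ (Fin n) ≃ₗᵢ[ℝ] EuclideanSpace ℝ (Fin n))
    (C : Set E) : volume (R ⁻¹' C) = volume C := by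
  have h1 : (Measure.map R (volume : Measure E)) C = volume (R ⁻¹' C) := by
    have h2 : (Measure.map R.toHomeomorph.toMeasurableEquiv (volume : Measure E)) C
        = volume (R.toHomeomorph.toMeasurableEquiv ⁻¹' C) :=
      MeasurableEquiv.map_apply _ C
    exact h2
  rw [← h1, (R.measurePreserving).map_eq]

lemma map_isometry_sphereMeasure (R : EuclideanSpace ℝ (Fin n) ≃ₗᵢ[ℝ] EuclideanSpace ℝ (Fin n)) :
    Measure.map R (Measure.map Subtype.val ((volume : Measure E).toSphere)) =
      Measure.map Subtype.val ((volume : Measure E).toSphere) := by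
  ext s hs
  have hval : ∀ (t : Set E) (ht : MeasurableSet t),
      Measure.map Subtype.val ((volume : Measure E).toSphere) t =
        (Module.finrank ℝ E : ℝ≥0∞) * volume (Ioo (0:ℝ) 1 • (t ∩ sphere (0:E) 1)) := by
    intro t ht
    rw [Measure.map_apply measurable_subtype_coe ht,
      Measure.toSphere_apply' _ (measurable_subtype_coe ht)]
    congr 2
    rw [Subtype.image_preimage_coe]
    simp [Set.inter_comm]
  rw [Measure.map_apply R.continuous.measurable hs,
    hval _ (hs.preimage R.continuous.measurable), hval s hs,
    smul_preimage_isometry, volume_preimage_isometry]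

lemma map_isometry_uniformSphere
    (R : EuclideanSpace ℝ (Fin n) ≃ₗᵢ[ℝ] EuclideanSpace ℝ (Fin n)) :
    Measure.map R (uniformSphere n) = uniformSphere n := by
  rw [uniformSphere, Measure.map_smul, map_isometry_sphereMeasure]

end Stmt11Aux

namespace Stmt11Aux
open Metric Set Pointwise

variable {n : ℕ}
local notation "E" => EuclideanSpace ℝ (Fin n)

lemma ae_norm_one {μ : Measure (EuclideanSpace ℝ (Fin n))} (hp : IsProbabilityMeasure μ)
    (hs : μ (sphere (0:E) 1) = 1) : ∀ᵐ x ∂μ, ‖x‖ = 1 := by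
  have hc : μ (sphere (0:E) 1)ᶜ = 0 := by
    rw [measure_compl Metric.isClosed_sphere.measurableSet (by simp), hs, measure_univ]
    simp
  rw [ae_iff]
  convert hc using 2
  ext x
  simp [mem_sphere_zero_iff_norm]

lemma abs_apply_le_norm (x : EuclideanSpace ℝ (Fin n)) (i : Fin n) : |x i| ≤ ‖x‖ := by
  rw [EuclideanSpace.norm_eq, ← Real.sqrt_sq_eq_abs]
  apply Real.sqrt_le_sqrt
  simpa using Finset.single_le_sum (f := fun j => ‖x j‖^2) (fun j _ => sq_nonneg _)
    (Finset.mem_univ i)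

lemma abs_monomial_le_one {x : EuclideanSpace ℝ (Fin n)} (hx : ‖x‖ = 1)
    {k : ℕ} (α : Fin k → Fin n) : |∏ j, x (α j)| ≤ 1 := by
  rw [Finset.abs_prod]
  apply Finset.prod_le_one (fun j _ => abs_nonneg _) (fun j _ => ?_)
  exact (abs_apply_le_norm x (α j)).trans_eq hx

lemma continuous_monomial {k : ℕ} (α : Fin k → Fin n) :
    Continuous (fun x : EuclideanSpace ℝ (Fin n) => ∏ j, x (α j)) := by
  apply continuous_finset_prod
  intro j _
  exact (EuclideanSpace.proj (α j) : EuclideanSpace ℝ (Fin n) →L[ℝ] ℝ).continuous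

lemma integrable_bound {α : Type*} [MeasurableSpace α] (P : Measure α) [IsFiniteMeasure P]
    {f : α → ℝ} (C : ℝ) (hm : AEStronglyMeasurable f P) (hb : ∀ᵐ z ∂P, |f z| ≤ C) :
    Integrable f P :=
  Integrable.mono' (integrable_const C) hm (by simpa [Real.norm_eq_abs] using hb)

lemma ae_prod_norm_one {μ ν : Measure (EuclideanSpace ℝ (Fin n))}
    [IsProbabilityMeasure μ] [IsProbabilityMeasure ν]
    (hμ : ∀ᵐ x ∂μ, ‖x‖ = 1) (hν : ∀ᵐ y ∂ν, ‖y‖ = 1) :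
    ∀ᵐ z ∂(μ.prod ν), ‖z.1‖ = 1 ∧ ‖z.2‖ = 1 := by
  have h1 : ∀ᵐ z ∂(μ.prod ν), ‖z.1‖ = 1 := by
    rw [ae_iff] at hμ ⊢
    have hset : {z : (EuclideanSpace ℝ (Fin n)) × (EuclideanSpace ℝ (Fin n)) | ¬ ‖z.1‖ = 1}
        = {x | ¬ ‖x‖ = 1} ×ˢ univ := by ext z; simp
    rw [hset, Measure.prod_prod, hμ, zero_mul]
  have h2 : ∀ᵐ z ∂(μ.prod ν), ‖z.2‖ = 1 := by
    rw [ae_iff] at hν ⊢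
    have hset : {z : (EuclideanSpace ℝ (Fin n)) × (EuclideanSpace ℝ (Fin n)) | ¬ ‖z.2‖ = 1}
        = univ ×ˢ {y | ¬ ‖y‖ = 1} := by ext z; simp
    rw [hset, Measure.prod_prod, hν, mul_zero]
  exact h1.and h2

/-- The moment of `μ` indexed by a monomial `α`. -/
noncomputable def mom (μ : Measure (EuclideanSpace ℝ (Fin n))) {k : ℕ}
    (α : Fin k → Fin n) : ℝ := ∫ x, ∏ j, x (α j) ∂μ

lemma inner_pow_expand (x y : EuclideanSpace ℝ (Fin n)) (k : ℕ) :
    ⟪x, y⟫ ^ k = ∑ α : Fin k → Fin n, (∏ j, x (α j)) * (∏ j, y (α j)) := by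
  have h : ⟪x, y⟫ = ∑ i, x i * y i := by
    simp [PiLp.inner_apply, RCLike.inner_apply, conj_trivial, mul_comm]
  rw [h, Fintype.sum_pow]
  congr 1
  funext α
  rw [← Finset.prod_mul_distrib]

lemma integrable_monomial {μ : Measure (EuclideanSpace ℝ (Fin n))} [IsProbabilityMeasure μ]
    (hμs : ∀ᵐ x ∂μ, ‖x‖ = 1) {k : ℕ} (α : Fin k → Fin n) :
    Integrable (fun x : EuclideanSpace ℝ (Fin n) => ∏ j, x (α j)) μ := by
  refine integrable_bound μ 1 (continuous_monomial α).aestronglyMeasurable ?_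
  filter_upwards [hμs] with x hx using abs_monomial_le_one hx α

end Stmt11Aux

namespace Stmt11Aux
open Metric Set

variable {n : ℕ} {lam : ℝ}
local notation "E" => EuclideanSpace ℝ (Fin n)

lemma exp_tsum (t : ℝ) : ∑' k : ℕ, t ^ k / (k.factorial : ℝ) = Real.exp t := by
  rw [Real.exp_eq_exp_ℝ, NormedSpace.exp_eq_tsum_div]

variable {μ ν : Measure (EuclideanSpace ℝ (Fin n))}
  [IsProbabilityMeasure μ] [IsProbabilityMeasure ν]

lemma integrable_K (hμs : ∀ᵐ x ∂μ, ‖x‖ = 1) (hνs : ∀ᵐ y ∂ν, ‖y‖ = 1) :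
    Integrable (fun z : E × E => Real.exp (lam * ⟪z.1, z.2⟫)) (μ.prod ν) := by
  refine integrable_bound _ (Real.exp |lam|) ?_ ?_
  · exact (Real.continuous_exp.comp (continuous_const.mul continuous_inner)).aestronglyMeasurable
  · filter_upwards [ae_prod_norm_one hμs hνs] with z hz
    have h1 := abs_real_inner_le_norm z.1 z.2
    rw [hz.1, hz.2, mul_one] at h1
    rw [abs_of_pos (Real.exp_pos _), Real.exp_le_exp]
    calc lam * ⟪z.1, z.2⟫ ≤ |lam * ⟪z.1, z.2⟫| := le_abs_self _
      _ = |lam| * |⟪z.1, z.2⟫| := abs_mul _ _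
      _ ≤ |lam| * 1 := mul_le_mul_of_nonneg_left h1 (abs_nonneg lam)
      _ = |lam| := mul_one _

lemma integral_inner_pow (hμs : ∀ᵐ x ∂μ, ‖x‖ = 1) (hνs : ∀ᵐ y ∂ν, ‖y‖ = 1) (k : ℕ) :
    ∫ z : E × E, ⟪z.1, z.2⟫ ^ k ∂(μ.prod ν)
      = ∑ α : Fin k → Fin n, mom μ α * mom ν α := by
  have hint : ∀ α : Fin k → Fin n,
      Integrable (fun z : E × E => (∏ j, z.1 (α j)) * (∏ j, z.2 (α j))) (μ.prod ν) := by
    intro α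
    exact Integrable.mul_prod (L := ℝ) (f := fun x : E => ∏ j, x (α j))
      (g := fun y : E => ∏ j, y (α j)) (integrable_monomial hμs α) (integrable_monomial hνs α)
  calc ∫ z : E × E, ⟪z.1, z.2⟫ ^ k ∂(μ.prod ν)
      = ∫ z : E × E, ∑ α : Fin k → Fin n, (∏ j, z.1 (α j)) * (∏ j, z.2 (α j)) ∂(μ.prod ν) := by
        congr 1; funext z; exact inner_pow_expand z.1 z.2 k
    _ = ∑ α : Fin k → Fin n, ∫ z : E × E, (∏ j, z.1 (α j)) * (∏ j, z.2 (α j)) ∂(μ.prod ν) :=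
        integral_finset_sum _ (fun α _ => hint α)
    _ = ∑ α : Fin k → Fin n, mom μ α * mom ν α := by
        refine Finset.sum_congr rfl (fun α _ => ?_)
        exact integral_prod_mul (L := ℝ) (fun x : E => ∏ j, x (α j)) (fun y : E => ∏ j, y (α j))

lemma energy_expansion (hμs : ∀ᵐ x ∂μ, ‖x‖ = 1) (hνs : ∀ᵐ y ∂ν, ‖y‖ = 1) :
    (∫ z : E × E, Real.exp (lam * ⟪z.1, z.2⟫) ∂(μ.prod ν)
      = ∑' k : ℕ, (lam ^ k / (k.factorial : ℝ)) * ∑ α : Fin k → Fin n, mom μ α * mom ν α)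
    ∧ Summable (fun k : ℕ =>
        (lam ^ k / (k.factorial : ℝ)) * ∑ α : Fin k → Fin n, mom μ α * mom ν α) := by
  set P := μ.prod ν with hP
  set F : ℕ → E × E → ℝ := fun k z => (lam * ⟪z.1, z.2⟫) ^ k / (k.factorial : ℝ) with hF
  have haeb : ∀ k, ∀ᵐ z ∂P, |F k z| ≤ |lam| ^ k / (k.factorial : ℝ) := by
    intro k
    filter_upwards [ae_prod_norm_one hμs hνs] with z hz
    have h1 := abs_real_inner_le_norm z.1 z.2
    rw [hz.1, hz.2, mul_one] at h1
    have h2 : |lam * ⟪z.1, z.2⟫| ≤ |lam| := by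
      rw [abs_mul]
      nlinarith [abs_nonneg lam, abs_nonneg (⟪z.1, z.2⟫ : ℝ)]
    have h3 : |F k z| = |lam * ⟪z.1, z.2⟫| ^ k / (k.factorial : ℝ) := by
      rw [hF]; simp [abs_div, abs_pow]
    rw [h3]
    gcongr
    all_goals first | exact h2 | exact abs_nonneg _
  have hcont : ∀ k, Continuous (fun z : E × E => F k z) := by
    intro k
    exact ((continuous_const.mul continuous_inner).pow k).div_const _
  have hint : ∀ k, Integrable (F k) P :=
    fun k => integrable_bound P _ (hcont k).aestronglyMeasurable (haeb k)
  have hnormle : ∀ k, ∫ z, ‖F k z‖ ∂P ≤ |lam| ^ k / (k.factorial : ℝ) := by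
    intro k
    have := integral_mono_ae (hint k).norm (integrable_const (|lam| ^ k / (k.factorial : ℝ)))
      (by filter_upwards [haeb k] with z hz; simpa [Real.norm_eq_abs] using hz)
    simpa using this
  have hsumnorm : Summable (fun k => ∫ z, ‖F k z‖ ∂P) := by
    refine Summable.of_nonneg_of_le (fun k => integral_nonneg (fun z => norm_nonneg _))
      hnormle (Real.summable_pow_div_factorial |lam|)
  have hFk : ∀ k, ∫ z, F k z ∂P
      = (lam ^ k / (k.factorial : ℝ)) * ∑ α : Fin k → Fin n, mom μ α * mom ν α := by
    intro k
    have h1 : ∀ z : E × E, F k z = (lam ^ k / (k.factorial : ℝ)) * ⟪z.1, z.2⟫ ^ k := by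
      intro z; rw [hF]; simp only; rw [mul_pow]; ring
    calc ∫ z, F k z ∂P = ∫ z : E × E, (lam ^ k / (k.factorial : ℝ)) * ⟪z.1, z.2⟫ ^ k ∂P := by
          congr 1; funext z; exact h1 z
      _ = (lam ^ k / (k.factorial : ℝ)) * ∫ z : E × E, ⟪z.1, z.2⟫ ^ k ∂P :=
          integral_const_mul _ _
      _ = _ := by rw [integral_inner_pow hμs hνs k]
  have hswap := integral_tsum_of_summable_integral_norm hint hsumnorm
  have hexp : ∀ z : E × E, ∑' k, F k z = Real.exp (lam * ⟪z.1, z.2⟫) := by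
    intro z; exact exp_tsum _
  constructor
  · calc ∫ z : E × E, Real.exp (lam * ⟪z.1, z.2⟫) ∂P
        = ∫ z : E × E, (∑' k, F k z) ∂P := by
          congr 1; funext z; rw [hexp z]
      _ = ∑' k, ∫ z, F k z ∂P := hswap.symm
      _ = _ := tsum_congr hFk
  · have hs : Summable (fun k => ∫ z, F k z ∂P) := by
      refine Summable.of_norm_bounded hsumnorm (fun k => norm_integral_le_integral_norm _)
    exact (summable_congr hFk).mp hs

end Stmt11Aux

namespace Stmt11Aux
open Metric Set

variable {n : ℕ} {lam : ℝ}
local notation "E" => EuclideanSpace ℝ (Fin n)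

variable {μ ν : Measure (EuclideanSpace ℝ (Fin n))}
  [IsProbabilityMeasure μ] [IsProbabilityMeasure ν]

lemma energyId_eq_prod (hμs : ∀ᵐ x ∂μ, ‖x‖ = 1) :
    energyId lam μ = ∫ z : E × E, Real.exp (lam * ⟪z.1, z.2⟫) ∂(μ.prod μ) := by
  rw [energyId]
  exact (integral_prod _ (integrable_K hμs hμs)).symm

lemma inner_integral_const (hmap : ∀ R : (EuclideanSpace ℝ (Fin n)) ≃ₗᵢ[ℝ]
      (EuclideanSpace ℝ (Fin n)), Measure.map R μ = μ)
    {x x' : EuclideanSpace ℝ (Fin n)} (hx : ‖x‖ = 1) (hx' : ‖x'‖ = 1) :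
    ∫ y, Real.exp (lam * ⟪x, y⟫) ∂μ = ∫ y, Real.exp (lam * ⟪x', y⟫) ∂μ := by
  have hnorm : ‖x‖ = ‖x'‖ := by rw [hx, hx']
  set R : (EuclideanSpace ℝ (Fin n)) ≃ₗᵢ[ℝ] (EuclideanSpace ℝ (Fin n)) :=
    Submodule.reflection (ℝ ∙ (x - x'))ᗮ with hRdef
  have hRx : R x = x' := Submodule.reflection_sub hnorm
  have hf : Continuous fun y : EuclideanSpace ℝ (Fin n) => Real.exp (lam * ⟪x', y⟫) :=
    Real.continuous_exp.comp (continuous_const.mul (Continuous.inner continuous_const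
      continuous_id))
  have h1 : ∫ y, Real.exp (lam * ⟪x', y⟫) ∂(Measure.map R μ)
      = ∫ y, Real.exp (lam * ⟪x', R y⟫) ∂μ :=
    integral_map R.continuous.measurable.aemeasurable hf.aestronglyMeasurable
  have h2 : ∫ y, Real.exp (lam * ⟪x', R y⟫) ∂μ = ∫ y, Real.exp (lam * ⟪x, y⟫) ∂μ := by
    congr 1
    funext y
    rw [← hRx, LinearIsometryEquiv.inner_map_map]
  rw [hmap R] at h1
  rw [← h2, ← h1]

lemma cross_const (hn : 1 ≤ n) (hνs : ∀ᵐ y ∂ν, ‖y‖ = 1) :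
    ∫ z : E × E, Real.exp (lam * ⟪z.1, z.2⟫) ∂(ν.prod (uniformSphere n))
      = ∫ z : E × E, Real.exp (lam * ⟪z.1, z.2⟫)
          ∂((uniformSphere n).prod (uniformSphere n)) := by
  haveI hu : IsProbabilityMeasure (uniformSphere n) := uniformSphere_isProb hn
  have hus : ∀ᵐ x ∂(uniformSphere n), ‖x‖ = 1 := ae_norm_one hu (uniformSphere_sphere hn)
  set x₀ : EuclideanSpace ℝ (Fin n) := EuclideanSpace.single ⟨0, hn⟩ (1:ℝ) with hx₀def
  have hx₀ : ‖x₀‖ = 1 := by rw [hx₀def, EuclideanSpace.norm_single]; norm_num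
  have hconst : ∀ x : EuclideanSpace ℝ (Fin n), ‖x‖ = 1 →
      ∫ y, Real.exp (lam * ⟪x, y⟫) ∂(uniformSphere n)
        = ∫ y, Real.exp (lam * ⟪x₀, y⟫) ∂(uniformSphere n) :=
    fun x hx => inner_integral_const (fun R => map_isometry_uniformSphere R) hx hx₀
  have key : ∀ (ρ : Measure (EuclideanSpace ℝ (Fin n))), IsProbabilityMeasure ρ →
      (∀ᵐ x ∂ρ, ‖x‖ = 1) →
      ∫ z : E × E, Real.exp (lam * ⟪z.1, z.2⟫) ∂(ρ.prod (uniformSphere n))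
        = ∫ y, Real.exp (lam * ⟪x₀, y⟫) ∂(uniformSphere n) := by
    intro ρ hρ hρs
    haveI := hρ
    rw [integral_prod _ (integrable_K hρs hus)]
    have : ∫ x, (∫ y, Real.exp (lam * ⟪x, y⟫) ∂(uniformSphere n)) ∂ρ
        = ∫ _ : EuclideanSpace ℝ (Fin n),
            (∫ y, Real.exp (lam * ⟪x₀, y⟫) ∂(uniformSphere n)) ∂ρ := by
      apply integral_congr_ae
      filter_upwards [hρs] with x hx using hconst x hx
    rw [this, integral_const, probReal_univ]
    simp
  rw [key ν ‹_› hνs, key (uniformSphere n) hu hus]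

end Stmt11Aux

namespace Stmt11Aux
open Metric Set

variable {n : ℕ}
local notation "E" => EuclideanSpace ℝ (Fin n)

lemma energy_diff (hn : 1 ≤ n) (lam : ℝ) (ν : Measure (EuclideanSpace ℝ (Fin n)))
    (hν : IsProbabilityMeasure ν) (hνs : ∀ᵐ y ∂ν, ‖y‖ = 1) :
    energyId lam ν - energyId lam (uniformSphere n)
      = ∑' k : ℕ, (lam ^ k / (k.factorial : ℝ)) *
          ∑ α : Fin k → Fin n, (mom ν α - mom (uniformSphere n) α) ^ 2
    ∧ Summable (fun k : ℕ => (lam ^ k / (k.factorial : ℝ)) *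
          ∑ α : Fin k → Fin n, (mom ν α - mom (uniformSphere n) α) ^ 2) := by
  haveI := hν
  haveI hu : IsProbabilityMeasure (uniformSphere n) := uniformSphere_isProb hn
  have hus : ∀ᵐ x ∂(uniformSphere n), ‖x‖ = 1 := ae_norm_one hu (uniformSphere_sphere hn)
  set u := uniformSphere n with hudef
  obtain ⟨hA, sA⟩ := energy_expansion (lam := lam) (μ := ν) (ν := ν) hνs hνs
  obtain ⟨hB, sB⟩ := energy_expansion (lam := lam) (μ := ν) (ν := u) hνs hus
  obtain ⟨hC, sC⟩ := energy_expansion (lam := lam) (μ := u) (ν := u) hus hus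
  have hcross : ∑' k : ℕ, (lam ^ k / (k.factorial : ℝ)) * ∑ α : Fin k → Fin n, mom ν α * mom u α
      = ∑' k : ℕ, (lam ^ k / (k.factorial : ℝ)) * ∑ α : Fin k → Fin n, mom u α * mom u α := by
    rw [← hB, ← hC]
    exact cross_const hn hνs
  have hptw : ∀ k : ℕ, (lam ^ k / (k.factorial : ℝ)) *
      ∑ α : Fin k → Fin n, (mom ν α - mom u α) ^ 2
      = ((lam ^ k / (k.factorial : ℝ)) * ∑ α : Fin k → Fin n, mom ν α * mom ν α)
        - 2 * ((lam ^ k / (k.factorial : ℝ)) * ∑ α : Fin k → Fin n, mom ν α * mom u α)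
        + ((lam ^ k / (k.factorial : ℝ)) * ∑ α : Fin k → Fin n, mom u α * mom u α) := by
    intro k
    rw [← mul_assoc, mul_comm (2:ℝ), mul_assoc, ← mul_sub, ← mul_add]
    congr 1
    rw [Finset.mul_sum, ← Finset.sum_sub_distrib, ← Finset.sum_add_distrib]
    refine Finset.sum_congr rfl (fun α _ => by ring)
  have hsumT : Summable (fun k : ℕ => (lam ^ k / (k.factorial : ℝ)) *
      ∑ α : Fin k → Fin n, (mom ν α - mom u α) ^ 2) := by
    rw [funext hptw]
    exact (sA.sub ((sB.mul_left 2))).add sC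
  constructor
  · have he1 : energyId lam ν = ∑' k : ℕ, (lam ^ k / (k.factorial : ℝ)) *
        ∑ α : Fin k → Fin n, mom ν α * mom ν α := by
      rw [energyId_eq_prod hνs]; exact hA
    have he2 : energyId lam u = ∑' k : ℕ, (lam ^ k / (k.factorial : ℝ)) *
        ∑ α : Fin k → Fin n, mom u α * mom u α := by
      rw [energyId_eq_prod hus]; exact hC
    rw [funext hptw, Summable.tsum_add (sA.sub (sB.mul_left 2)) sC,
      Summable.tsum_sub sA (sB.mul_left 2), tsum_mul_left, hcross, he1, he2]
    ring
  · exact hsumT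

end Stmt11Aux

namespace Stmt11Aux
open Metric Set

variable {n : ℕ}
local notation "E" => EuclideanSpace ℝ (Fin n)

section Determinacy

variable (S : Set (EuclideanSpace ℝ (Fin n)))

/-- coordinate functions on the sphere -/
noncomputable def coordFun (i : Fin n) : C(Metric.sphere (0:EuclideanSpace ℝ (Fin n)) 1, ℝ) :=
  ⟨fun x => (x : EuclideanSpace ℝ (Fin n)) i,
    ((EuclideanSpace.proj i : EuclideanSpace ℝ (Fin n) →L[ℝ] ℝ).continuous).comp
      continuous_subtype_val⟩

lemma monomials_of_closure {g : C(Metric.sphere (0:EuclideanSpace ℝ (Fin n)) 1, ℝ)}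
    (hg : g ∈ Submonoid.closure (Set.range (coordFun (n := n)))) :
    ∃ (k : ℕ) (α : Fin k → Fin n), ∀ x : Metric.sphere (0:EuclideanSpace ℝ (Fin n)) 1,
      g x = ∏ j, (x : EuclideanSpace ℝ (Fin n)) (α j) := by
  induction hg using Submonoid.closure_induction with
  | mem f hf =>
    obtain ⟨i, rfl⟩ := hf
    exact ⟨1, fun _ => i, fun x => by simp [coordFun]; rfl⟩
  | one => exact ⟨0, Fin.elim0, fun x => by simp⟩
  | mul f g hfc hgc hf hg =>
    obtain ⟨k, α, hα⟩ := hf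
    obtain ⟨l, β, hβ⟩ := hg
    refine ⟨k + l, Fin.append α β, fun x => ?_⟩
    rw [ContinuousMap.mul_apply, hα x, hβ x, Fin.prod_univ_add]
    congr 1
    · exact Finset.prod_congr rfl (fun j _ => by rw [Fin.append_left])
    · exact Finset.prod_congr rfl (fun j _ => by rw [Fin.append_right])

end Determinacy

lemma integrable_contMap {X : Type*} [MeasurableSpace X] [TopologicalSpace X]
    [CompactSpace X] [OpensMeasurableSpace X] (P : Measure X) [IsFiniteMeasure P]
    (g : C(X, ℝ)) : Integrable (fun x => g x) P := by
  have := ((ContinuousMap.equivBoundedOfCompact X ℝ) g).integrable P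
  exact this

lemma measure_eq_of_moments (μ ν : Measure (EuclideanSpace ℝ (Fin n)))
    [hμ : IsProbabilityMeasure μ] [hν : IsProbabilityMeasure ν]
    (hμs : μ (sphere (0:E) 1) = 1) (hνs : ν (sphere (0:E) 1) = 1)
    (hm : ∀ (k : ℕ) (α : Fin k → Fin n), mom μ α = mom ν α) : μ = ν := by
  have hSm : MeasurableSet (sphere (0:E) 1) := Metric.isClosed_sphere.measurableSet
  have hemb : MeasurableEmbedding (Subtype.val : sphere (0:E) 1 → E) :=
    MeasurableEmbedding.subtype_coe hSm
  set μ' := Measure.comap Subtype.val μ with hμ'def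
  set ν' := Measure.comap Subtype.val ν with hν'def
  have hmapμ : Measure.map Subtype.val μ' = μ := by
    rw [hμ'def, hemb.map_comap, Subtype.range_coe, Measure.restrict_eq_self_of_ae_mem]
    filter_upwards [ae_norm_one hμ hμs] with x hx
    simpa [mem_sphere_zero_iff_norm] using hx
  have hmapν : Measure.map Subtype.val ν' = ν := by
    rw [hν'def, hemb.map_comap, Subtype.range_coe, Measure.restrict_eq_self_of_ae_mem]
    filter_upwards [ae_norm_one hν hνs] with x hx
    simpa [mem_sphere_zero_iff_norm] using hx
  haveI : IsProbabilityMeasure μ' := by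
    constructor
    rw [hμ'def, hemb.comap_apply, Set.image_univ, Subtype.range_coe, hμs]
  haveI : IsProbabilityMeasure ν' := by
    constructor
    rw [hν'def, hemb.comap_apply, Set.image_univ, Subtype.range_coe, hνs]
  -- integrals of monomials agree
  have hmonoint : ∀ (k : ℕ) (α : Fin k → Fin n),
      ∫ x : sphere (0:E) 1, (∏ j, (x : E) (α j)) ∂μ'
        = ∫ x : sphere (0:E) 1, (∏ j, (x : E) (α j)) ∂ν' := by
    intro k α
    have h1 : ∫ x : sphere (0:E) 1, (∏ j, (x : E) (α j)) ∂μ' = mom μ α := by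
      rw [mom, ← hmapμ, integral_map hemb.measurable.aemeasurable
        (continuous_monomial α).aestronglyMeasurable]
    have h2 : ∫ x : sphere (0:E) 1, (∏ j, (x : E) (α j)) ∂ν' = mom ν α := by
      rw [mom, ← hmapν, integral_map hemb.measurable.aemeasurable
        (continuous_monomial α).aestronglyMeasurable]
    rw [h1, h2, hm k α]
  -- integrals of all continuous functions agree
  have hcont : ∀ g : C(sphere (0:E) 1, ℝ), ∫ x, g x ∂μ' = ∫ x, g x ∂ν' := by
    intro g
    set A : Subalgebra ℝ C(sphere (0:E) 1, ℝ) :=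
      Algebra.adjoin ℝ (Set.range (coordFun (n := n))) with hAdef
    have hsep : A.SeparatesPoints := by
      intro x y hxy
      have hxy' : (x : E) ≠ (y : E) := fun h => hxy (Subtype.coe_injective h)
      obtain ⟨i, hi⟩ : ∃ i, (x : E) i ≠ (y : E) i := by
        by_contra h
        push_neg at h
        exact hxy' (PiLp.ext h)
      exact ⟨coordFun i, ⟨coordFun i, Algebra.subset_adjoin ⟨i, rfl⟩, rfl⟩, hi⟩
    have hA : A.topologicalClosure = ⊤ :=
      ContinuousMap.subalgebra_topologicalClosure_eq_top_of_separatesPoints A hsep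
    -- integrals agree on A
    have hAint : ∀ f ∈ A, ∫ x, f x ∂μ' = ∫ x, f x ∂ν' := by
      intro f hf
      have hf' : f ∈ Submodule.span ℝ
          ((Submonoid.closure (Set.range (coordFun (n := n))) : Set C(sphere (0:E) 1, ℝ))) := by
        have := Algebra.adjoin_eq_span (R := ℝ)
          (s := (Set.range (coordFun (n := n))))
        rw [← Subalgebra.mem_toSubmodule, this] at hf
        exact hf
      clear hf
      induction hf' using Submodule.span_induction with
      | mem f hfmem =>
        obtain ⟨k, α, hα⟩ := monomials_of_closure hfmem
        calc ∫ x, f x ∂μ' = ∫ x : sphere (0:E) 1, (∏ j, (x : E) (α j)) ∂μ' := by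
              apply integral_congr_ae; filter_upwards with x; rw [hα x]
          _ = ∫ x : sphere (0:E) 1, (∏ j, (x : E) (α j)) ∂ν' := hmonoint k α
          _ = ∫ x, f x ∂ν' := by
              apply integral_congr_ae; filter_upwards with x; rw [hα x]
      | zero => simp
      | add f g hfm hgm hf hg =>
        have hi1 := integrable_contMap μ' f
        have hi2 := integrable_contMap μ' g
        have hi3 := integrable_contMap ν' f
        have hi4 := integrable_contMap ν' g
        simp only [ContinuousMap.add_apply]
        rw [integral_add hi1 hi2, integral_add hi3 hi4, hf, hg]
      | smul c f hfm hf =>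
        simp only [ContinuousMap.smul_apply, smul_eq_mul]
        rw [integral_const_mul, integral_const_mul, hf]
    -- pass to the closure
    have hΦμ : Continuous (fun g : C(sphere (0:E) 1, ℝ) => ∫ x, g x ∂μ') := by
      refine (LipschitzWith.of_dist_le_mul (K := 1) ?_).continuous
      intro f g
      rw [NNReal.coe_one, one_mul, dist_eq_norm, dist_eq_norm]
      have : ∫ x, f x ∂μ' - ∫ x, g x ∂μ' = ∫ x, (f x - g x) ∂μ' := by
        rw [integral_sub (integrable_contMap μ' f) (integrable_contMap μ' g)]
      rw [this]
      have hb := norm_integral_le_of_norm_le_const (μ := μ')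
        (f := fun x => f x - g x) (C := ‖f - g‖) ?_
      · simpa using hb
      · filter_upwards with x
        calc ‖f x - g x‖ = ‖(f - g) x‖ := by simp
          _ ≤ ‖f - g‖ := ContinuousMap.norm_coe_le_norm _ x
    have hΦν : Continuous (fun g : C(sphere (0:E) 1, ℝ) => ∫ x, g x ∂ν') := by
      refine (LipschitzWith.of_dist_le_mul (K := 1) ?_).continuous
      intro f g
      rw [NNReal.coe_one, one_mul, dist_eq_norm, dist_eq_norm]
      have : ∫ x, f x ∂ν' - ∫ x, g x ∂ν' = ∫ x, (f x - g x) ∂ν' := by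
        rw [integral_sub (integrable_contMap ν' f) (integrable_contMap ν' g)]
      rw [this]
      have hb := norm_integral_le_of_norm_le_const (μ := ν')
        (f := fun x => f x - g x) (C := ‖f - g‖) ?_
      · simpa using hb
      · filter_upwards with x
        calc ‖f x - g x‖ = ‖(f - g) x‖ := by simp
          _ ≤ ‖f - g‖ := ContinuousMap.norm_coe_le_norm _ x
    have heqon : Set.EqOn (fun g : C(sphere (0:E) 1, ℝ) => ∫ x, g x ∂μ')
        (fun g : C(sphere (0:E) 1, ℝ) => ∫ x, g x ∂ν') (A : Set C(sphere (0:E) 1, ℝ)) :=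
      fun f hf => hAint f hf
    have hclos : g ∈ closure (A : Set C(sphere (0:E) 1, ℝ)) := by
      have : g ∈ A.topologicalClosure := by rw [hA]; trivial
      exact this
    exact heqon.closure hΦμ hΦν hclos
  -- conclude equality of the subtype measures, then of the measures
  have h' : μ' = ν' := by
    apply ext_of_forall_lintegral_eq_of_IsFiniteMeasure
    intro f
    have h1 := BoundedContinuousFunction.toReal_lintegral_coe_eq_integral f μ'
    have h2 := BoundedContinuousFunction.toReal_lintegral_coe_eq_integral f ν'
    have h3 : ∫ x, ((f x : ℝ)) ∂μ' = ∫ x, ((f x : ℝ)) ∂ν' := by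
      have := hcont ⟨fun x => (f x : ℝ), NNReal.continuous_coe.comp f.continuous⟩
      simpa using this
    have hfin1 : ∫⁻ x, (f x : ℝ≥0∞) ∂μ' ≠ ⊤ :=
      (BoundedContinuousFunction.lintegral_lt_top_of_nnreal μ' f).ne
    have hfin2 : ∫⁻ x, (f x : ℝ≥0∞) ∂ν' ≠ ⊤ :=
      (BoundedContinuousFunction.lintegral_lt_top_of_nnreal ν' f).ne
    rw [← ENNReal.toReal_eq_toReal_iff' hfin1 hfin2, h1, h2]
    exact h3
  rw [← hmapμ, ← hmapν, h']

end Stmt11Aux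


theorem stmt11 {n : ℕ} (hn : 1 ≤ n) (lam : ℝ) (hlam : 0 < lam) :
    (IsProbabilityMeasure (uniformSphere n) ∧
      uniformSphere n (Metric.sphere (0 : EuclideanSpace ℝ (Fin n)) 1) = 1 ∧
      ∀ ν : Measure (EuclideanSpace ℝ (Fin n)), IsProbabilityMeasure ν →
        ν (Metric.sphere (0 : EuclideanSpace ℝ (Fin n)) 1) = 1 →
        energyId lam (uniformSphere n) ≤ energyId lam ν) ∧
    (∀ μ : Measure (EuclideanSpace ℝ (Fin n)), IsProbabilityMeasure μ →
      μ (Metric.sphere (0 : EuclideanSpace ℝ (Fin n)) 1) = 1 →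
      (∀ ν : Measure (EuclideanSpace ℝ (Fin n)), IsProbabilityMeasure ν →
        ν (Metric.sphere (0 : EuclideanSpace ℝ (Fin n)) 1) = 1 →
        energyId lam μ ≤ energyId lam ν) →
      μ = uniformSphere n) := by
  have hup : IsProbabilityMeasure (uniformSphere n) := Stmt11Aux.uniformSphere_isProb hn
  have husph : uniformSphere n (Metric.sphere (0 : EuclideanSpace ℝ (Fin n)) 1) = 1 :=
    Stmt11Aux.uniformSphere_sphere hn
  have part1min : ∀ ν : Measure (EuclideanSpace ℝ (Fin n)), IsProbabilityMeasure ν →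
      ν (Metric.sphere (0 : EuclideanSpace ℝ (Fin n)) 1) = 1 →
      energyId lam (uniformSphere n) ≤ energyId lam ν := by
    intro ν hν hνs
    obtain ⟨hd, _⟩ := Stmt11Aux.energy_diff hn lam ν hν (Stmt11Aux.ae_norm_one hν hνs)
    have hnn : 0 ≤ energyId lam ν - energyId lam (uniformSphere n) := by
      rw [hd]
      refine tsum_nonneg (fun k => mul_nonneg ?_ ?_)
      · exact div_nonneg (pow_nonneg hlam.le k) (Nat.cast_nonneg _)
      · exact Finset.sum_nonneg fun α _ => sq_nonneg _
    linarith
  refine ⟨⟨hup, husph, part1min⟩, ?_⟩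
  intro μ hμ hμs hmin
  have h1 := hmin (uniformSphere n) hup husph
  have h2 := part1min μ hμ hμs
  obtain ⟨hd, hs⟩ := Stmt11Aux.energy_diff hn lam μ hμ (Stmt11Aux.ae_norm_one hμ hμs)
  have hzero : (∑' k : ℕ, (lam ^ k / (k.factorial : ℝ)) *
      ∑ α : Fin k → Fin n, (Stmt11Aux.mom μ α - Stmt11Aux.mom (uniformSphere n) α) ^ 2) = 0 := by
    rw [← hd]; linarith
  have hnnterm : ∀ k : ℕ, 0 ≤ (lam ^ k / (k.factorial : ℝ)) *
      ∑ α : Fin k → Fin n, (Stmt11Aux.mom μ α - Stmt11Aux.mom (uniformSphere n) α) ^ 2 :=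
    fun k => mul_nonneg (div_nonneg (pow_nonneg hlam.le k) (Nat.cast_nonneg _))
      (Finset.sum_nonneg fun α _ => sq_nonneg _)
  have hterm : ∀ k : ℕ, (lam ^ k / (k.factorial : ℝ)) *
      ∑ α : Fin k → Fin n, (Stmt11Aux.mom μ α - Stmt11Aux.mom (uniformSphere n) α) ^ 2 = 0 := by
    intro k
    have hle := Summable.le_tsum hs k (fun j _ => hnnterm j)
    rw [hzero] at hle
    exact le_antisymm hle (hnnterm k)
  have hmom : ∀ (k : ℕ) (α : Fin k → Fin n),
      Stmt11Aux.mom μ α = Stmt11Aux.mom (uniformSphere n) α := by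
    intro k α
    have hc : (0:ℝ) < lam ^ k / (k.factorial : ℝ) := by
      apply div_pos (pow_pos hlam k)
      exact_mod_cast k.factorial_pos
    have hsum0 : ∑ α : Fin k → Fin n,
        (Stmt11Aux.mom μ α - Stmt11Aux.mom (uniformSphere n) α) ^ 2 = 0 :=
      (mul_eq_zero.mp (hterm k)).resolve_left hc.ne'
    have := (Finset.sum_eq_zero_iff_of_nonneg (fun α _ => sq_nonneg _)).mp hsum0 α
      (Finset.mem_univ α)
    have := pow_eq_zero_iff (two_ne_zero) |>.mp this
    linarith [this]
  exact Stmt11Aux.measure_eq_of_moments (hμ := hμ) (hν := hup) μ (uniformSphere n) hμs husph hmom
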